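/- Suppose 1 < α ≤ β < s(σ) < r, q ≥ β(Δ(σ)-1) + 1 and n ≥ ⌊(s(σ)-1)/(α-1)⌋·(s(σ)-α) + 2s(σ) - 1. Then H(n,r,q|σ) is not (α,β)-colourable. -/

import Mathlib

open Finset

/-- `K` is an edge of the σ-hypergraph `H(n,r,q | σ)`: the multiset of non-zero
cardinalities of the intersections of `K` with the `n` classes equals `σ`. -/
def sigmaEdge (n q : ℕ) (σ : Multiset ℕ) (K : Finset (Fin n × Fin q)) : Prop :=
  (((Finset.univ : Finset (Fin n)).val.map
      fun i => (K.filter fun v => v.1 = i).card).filter fun m => m ≠ 0) = σ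

/-- `c` is an `(α,β)`-colouring: every edge contains at least `α` and at most `β` colours. -/
def isABColouring (n q : ℕ) (σ : Multiset ℕ) (α β : ℕ) (c : Fin n × Fin q → ℕ) : Prop :=
  ∀ K : Finset (Fin n × Fin q), sigmaEdge n q σ K →
    α ≤ (K.image c).card ∧ (K.image c).card ≤ β

/-- `c` uses exactly `k` colours. -/
def usesExactly (n q k : ℕ) (c : Fin n × Fin q → ℕ) : Prop :=
  ((Finset.univ : Finset (Fin n × Fin q)).image c).card = k

/-- every class of the σ-hypergraph is monochromatic under `c`. -/
def classesMonochromatic (n q : ℕ) (c : Fin n × Fin q → ℕ) : Prop :=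
  ∀ v w : Fin n × Fin q, v.1 = w.1 → c v = c w

/-- `σ` is a partition of `r` (a multiset of positive integers summing to `r`). -/
def IsPartitionOf (σ : Multiset ℕ) (r : ℕ) : Prop := σ.sum = r ∧ 0 ∉ σ


lemma exists_assignment {γ : Type*} [DecidableEq γ] (σ : Multiset ℕ) :
    ∀ S : Finset γ, S.card = σ.card → ∃ p : γ → ℕ, S.val.map p = σ := by
  induction σ using Multiset.induction with
  | empty =>
      intro S h
      have : S = ∅ := Finset.card_eq_zero.mp (by simpa using h)
      exact ⟨fun _ => 0, by simp [this]⟩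
  | cons a σ ih =>
      intro S h
      have hS : S.Nonempty := Finset.card_pos.mp (by rw [h]; simp)
      obtain ⟨i₀, hi₀⟩ := hS
      obtain ⟨p', hp'⟩ := ih (S.erase i₀)
        (by rw [Finset.card_erase_of_mem hi₀, h]; simp)
      refine ⟨Function.update p' i₀ a, ?_⟩
      have hv : S.val = i₀ ::ₘ (S.erase i₀).val := by
        conv_lhs => rw [← Finset.insert_erase hi₀]
        exact Finset.insert_val_of_notMem (Finset.notMem_erase _ _)
      rw [hv, Multiset.map_cons, Function.update_self]
      congr 1
      rw [← hp']
      apply Multiset.map_congr rfl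
      intro i hi
      exact Function.update_of_ne (Finset.ne_of_mem_erase (Finset.mem_val.mp hi)) _ _

lemma mem_edge_aux {n q : ℕ} (S : Finset (Fin n)) (A : Fin n → Finset (Fin q))
    (v : Fin n × Fin q) :
    v ∈ (S.biUnion fun i => {i} ×ˢ A i) ↔ v.1 ∈ S ∧ v.2 ∈ A v.1 := by
  simp only [Finset.mem_biUnion, Finset.mem_product, Finset.mem_singleton]
  constructor
  · rintro ⟨i, hi, h1, h2⟩; rw [h1]; exact ⟨hi, h2⟩
  · rintro ⟨h1, h2⟩; exact ⟨v.1, h1, rfl, h2⟩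

lemma card_edge_aux {n q : ℕ} (S : Finset (Fin n)) (A : Fin n → Finset (Fin q))
    (i : Fin n) :
    ((S.biUnion fun j => {j} ×ˢ A j).filter fun v => v.1 = i).card
      = if i ∈ S then (A i).card else 0 := by
  by_cases hi : i ∈ S
  · rw [if_pos hi]
    have he : ((S.biUnion fun j => {j} ×ˢ A j).filter fun v => v.1 = i) = {i} ×ˢ A i := by
      ext v
      rw [Finset.mem_filter, mem_edge_aux, Finset.mem_product, Finset.mem_singleton]
      constructor
      · rintro ⟨⟨h1, h2⟩, h3⟩; exact ⟨h3, by rwa [h3] at h2⟩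
      · rintro ⟨h3, h2⟩; exact ⟨⟨by rwa [h3], by rwa [h3]⟩, h3⟩
    rw [he, Finset.card_product, Finset.card_singleton, one_mul]
  · rw [if_neg hi, Finset.card_eq_zero, Finset.filter_eq_empty_iff]
    intro v hv h
    exact hi (h ▸ ((mem_edge_aux S A v).mp hv).1)

lemma edge_aux (n q : ℕ) (σ : Multiset ℕ) (hσ : 0 ∉ σ)
    (S : Finset (Fin n)) (p : Fin n → ℕ) (hp : S.val.map p = σ)
    (A : Fin n → Finset (Fin q)) (hA : ∀ i ∈ S, (A i).card = p i) :
    sigmaEdge n q σ (S.biUnion fun i => {i} ×ˢ A i) := by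
  unfold sigmaEdge
  have hle : S.val ≤ (univ : Finset (Fin n)).val :=
    Finset.val_le_iff.mpr (Finset.subset_univ S)
  have huniv : (univ : Finset (Fin n)).val = S.val + ((univ : Finset (Fin n)) \ S).val := by
    rw [Finset.sdiff_val, add_tsub_cancel_of_le hle]
  rw [huniv, Multiset.map_add, Multiset.filter_add]
  have h1 : S.val.map (fun i => ((S.biUnion fun j => {j} ×ˢ A j).filter
      fun v => v.1 = i).card) = σ := by
    rw [← hp]
    apply Multiset.map_congr rfl
    intro i hi
    rw [card_edge_aux, if_pos (Finset.mem_val.mp hi), hA i (Finset.mem_val.mp hi)]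
  rw [h1]
  have h3 : Multiset.filter (fun m => m ≠ 0) σ = σ := by
    rw [Multiset.filter_eq_self]
    intro a ha h
    exact hσ (h ▸ ha)
  have h2 : Multiset.filter (fun m => m ≠ 0)
      ((((univ : Finset (Fin n)) \ S).val).map fun i =>
        ((S.biUnion fun j => {j} ×ˢ A j).filter fun v => v.1 = i).card) = 0 := by
    rw [Multiset.filter_eq_nil]
    intro a ha
    obtain ⟨i, hi, rfl⟩ := Multiset.mem_map.mp ha
    have hns : i ∉ S := (Finset.mem_sdiff.mp (Finset.mem_val.mp hi)).2
    rw [card_edge_aux, if_neg hns]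
    simp
  rw [h2, h3, add_zero]

theorem stmt11 (n r q α β Δ : ℕ) (σ : Multiset ℕ)
    (hpart : IsPartitionOf σ r)
    (hΔmem : Δ ∈ σ) (hΔmax : ∀ x ∈ σ, x ≤ Δ)
    (hα : 1 < α) (hαβ : α ≤ β) (hβs : β < σ.card) (hsr : σ.card < r)
    (hq : β * (Δ - 1) + 1 ≤ q)
    (hn : ((σ.card - 1) / (α - 1)) * (σ.card - α) + 2 * σ.card - 1 ≤ n) :
    ∀ c : Fin n × Fin q → ℕ, ¬ isABColouring n q σ α β c := by
  classical
  intro c hc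
  obtain ⟨hsum, h0σ⟩ := hpart
  set s := σ.card with hs
  -- basic numeric facts
  have hΔ1 : 1 ≤ Δ := Nat.pos_of_ne_zero (fun h => h0σ (h ▸ hΔmem))
  have hΔq : Δ ≤ q := by
    have h1 : 1 * (Δ - 1) ≤ β * (Δ - 1) := Nat.mul_le_mul_right _ (by omega)
    omega
  have h2s : 2 * s - 1 ≤ n := le_trans (by omega) hn
  have hs3 : 3 ≤ s := by omega
  have hsn : s ≤ n := by omega
  have hposσ : ∀ x ∈ σ, 1 ≤ x := fun x hx => Nat.pos_of_ne_zero (fun h => h0σ (h ▸ hx))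
  -- Step R : any "rainbow" (distinct classes, distinct colours) has ≤ β vertices
  have hrainbow : ∀ W : Finset (Fin n × Fin q),
      Set.InjOn Prod.fst (W : Set (Fin n × Fin q)) → Set.InjOn c (W : Set (Fin n × Fin q)) →
      W.card ≤ β := by
    intro W hfst hcol
    by_contra hW
    push_neg at hW
    obtain ⟨W', hW'sub, hW'card⟩ := Finset.exists_subset_card_eq (show β + 1 ≤ W.card from hW)
    have hsubset : (W' : Set (Fin n × Fin q)) ⊆ (W : Set (Fin n × Fin q)) := by
      exact_mod_cast hW'sub
    have hfst' : Set.InjOn Prod.fst (W' : Set (Fin n × Fin q)) := hfst.mono hsubset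
    have hcol' : Set.InjOn c (W' : Set (Fin n × Fin q)) := hcol.mono hsubset
    have hTcard : (W'.image Prod.fst).card = β + 1 := by
      rw [Finset.card_image_of_injOn hfst', hW'card]
    obtain ⟨S, hTS, _, hScard⟩ := Finset.exists_subsuperset_card_eq (n := s)
      (Finset.subset_univ (W'.image Prod.fst)) (by rw [hTcard]; omega)
      (by rw [Finset.card_univ, Fintype.card_fin]; exact hsn)
    obtain ⟨p, hp⟩ := exists_assignment σ S (by rw [hScard])
    have hpmem : ∀ i ∈ S, p i ∈ σ := by
      intro i hi
      rw [← hp]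
      exact Multiset.mem_map_of_mem _ (Finset.mem_val.mpr hi)
    have hAex : ∀ i : Fin n, ∃ B : Finset (Fin q), i ∈ S →
        (((W'.filter fun w => w.1 = i).image Prod.snd) ⊆ B ∧ B.card = p i) := by
      intro i
      by_cases hi : i ∈ S
      · have hsmall : ((W'.filter fun w => w.1 = i).image Prod.snd).card ≤ p i := by
          have h1 : (W'.filter fun w => w.1 = i).card ≤ 1 := by
            rw [Finset.card_le_one]
            intro u hu v hv
            rw [Finset.mem_filter] at hu hv
            exact hfst' (Finset.mem_coe.mpr hu.1) (Finset.mem_coe.mpr hv.1)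
              (by rw [hu.2, hv.2])
          calc ((W'.filter fun w => w.1 = i).image Prod.snd).card
              ≤ (W'.filter fun w => w.1 = i).card := Finset.card_image_le
            _ ≤ 1 := h1
            _ ≤ p i := hposσ _ (hpmem i hi)
        obtain ⟨B, hB1, _, hB2⟩ := Finset.exists_subsuperset_card_eq (n := p i)
          (Finset.subset_univ _) hsmall
          (by rw [Finset.card_univ, Fintype.card_fin]
              exact le_trans (hΔmax _ (hpmem i hi)) hΔq)
        exact ⟨B, fun _ => ⟨hB1, hB2⟩⟩
      · exact ⟨∅, fun h => absurd h hi⟩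
    choose A hA using hAex
    have hedge := edge_aux n q σ h0σ S p hp A (fun i hi => (hA i hi).2)
    have hub := (hc _ hedge).2
    have hWK : W' ⊆ S.biUnion fun i => {i} ×ˢ A i := by
      intro w hw
      rw [mem_edge_aux]
      have hw1 : w.1 ∈ S := hTS (Finset.mem_image_of_mem Prod.fst hw)
      refine ⟨hw1, (hA w.1 hw1).1 ?_⟩
      exact Finset.mem_image_of_mem Prod.snd (Finset.mem_filter.mpr ⟨hw, rfl⟩)
    have himg : W'.image c ⊆ (S.biUnion fun i => {i} ×ˢ A i).image c :=
      Finset.image_subset_image hWK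
    have hcard2 : (W'.image c).card = β + 1 := by
      rw [Finset.card_image_of_injOn hcol', hW'card]
    have := Finset.card_le_card himg
    omega
  -- Step M : a maximum rainbow
  obtain ⟨W₀, hW₀mem, hW₀max⟩ := Finset.exists_max_image (α := ℕ) (β := Finset (Fin n × Fin q))
    ((Finset.univ : Finset (Finset (Fin n × Fin q))).filter fun W : Finset (Fin n × Fin q) =>
      Set.InjOn Prod.fst (W : Set (Fin n × Fin q)) ∧ Set.InjOn c (W : Set (Fin n × Fin q)))
    Finset.card ⟨∅, by simp [Set.InjOn]⟩
  obtain ⟨-, hW₀fst, hW₀col⟩ := Finset.mem_filter.mp hW₀mem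
  set t := W₀.card with hts
  have ht : t ≤ β := hrainbow W₀ hW₀fst hW₀col
  set T₀ := W₀.image Prod.fst with hT₀
  set X := W₀.image c with hX
  have hT₀card : T₀.card = t := Finset.card_image_of_injOn hW₀fst
  have hXcard : X.card = t := Finset.card_image_of_injOn hW₀col
  -- maximality : any class outside T₀ only uses colours of X
  have hclassX : ∀ i : Fin n, i ∉ T₀ → ∀ x : Fin q, c (i, x) ∈ X := by
    intro i hi x
    by_contra hcx
    have hkey : ∀ u ∈ W₀, u.1 ≠ i ∧ c u ≠ c (i, x) := by
      intro u hu
      constructor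
      · intro h
        exact hi (h ▸ Finset.mem_image_of_mem Prod.fst hu)
      · intro h
        exact hcx (h ▸ Finset.mem_image_of_mem c hu)
    have hnm : (i, x) ∉ W₀ := fun h => (hkey _ h).1 rfl
    have hfst2 : Set.InjOn Prod.fst ((insert (i, x) W₀ : Finset (Fin n × Fin q)) :
        Set (Fin n × Fin q)) := by
      rw [Finset.coe_insert]
      intro u hu v hv huv
      rcases Set.mem_insert_iff.mp hu with rfl | hu' <;>
        rcases Set.mem_insert_iff.mp hv with rfl | hv'
      · rfl
      · exact absurd huv.symm (hkey _ (Finset.mem_coe.mp hv')).1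
      · exact absurd huv (hkey _ (Finset.mem_coe.mp hu')).1
      · exact hW₀fst hu' hv' huv
    have hcol2 : Set.InjOn c ((insert (i, x) W₀ : Finset (Fin n × Fin q)) :
        Set (Fin n × Fin q)) := by
      rw [Finset.coe_insert]
      intro u hu v hv huv
      rcases Set.mem_insert_iff.mp hu with rfl | hu' <;>
        rcases Set.mem_insert_iff.mp hv with rfl | hv'
      · rfl
      · exact absurd huv.symm (hkey _ (Finset.mem_coe.mp hv')).2
      · exact absurd huv (hkey _ (Finset.mem_coe.mp hu')).2
      · exact hW₀col hu' hv' huv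
    have hmem2 : insert (i, x) W₀ ∈ (Finset.univ : Finset (Finset (Fin n × Fin q))).filter
        (fun W : Finset (Fin n × Fin q) => Set.InjOn Prod.fst (W : Set (Fin n × Fin q)) ∧
          Set.InjOn c (W : Set (Fin n × Fin q))) :=
      Finset.mem_filter.mpr ⟨Finset.mem_univ _, hfst2, hcol2⟩
    have := hW₀max _ hmem2
    rw [Finset.card_insert_of_notMem hnm] at this
    omega
  -- the good classes
  set G := (Finset.univ : Finset (Fin n)) \ T₀ with hG
  have hGcard : G.card = n - t := by
    rw [hG, Finset.card_sdiff_of_subset (Finset.subset_univ _), Finset.card_univ, Fintype.card_fin,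
      hT₀card]
  -- strong colours
  have hstrong : ∀ i : Fin n, ∃ y : ℕ, i ∈ G →
      y ∈ X ∧ Δ ≤ (Finset.univ.filter fun x : Fin q => c (i, x) = y).card := by
    intro i
    by_cases hi : i ∈ G
    · have hiT : i ∉ T₀ := (Finset.mem_sdiff.mp hi).2
      have hmaps : ∀ x ∈ (Finset.univ : Finset (Fin q)), c (i, x) ∈ X :=
        fun x _ => hclassX i hiT x
      have hlt : X.card * (Δ - 1) < (Finset.univ : Finset (Fin q)).card := by
        rw [Finset.card_univ, Fintype.card_fin]
        have : X.card * (Δ - 1) ≤ β * (Δ - 1) :=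
          Nat.mul_le_mul_right _ (by rw [hXcard]; exact ht)
        omega
      obtain ⟨y, hy, hylt⟩ := Finset.exists_lt_card_fiber_of_mul_lt_card_of_maps_to hmaps hlt
      exact ⟨y, fun _ => ⟨hy, by omega⟩⟩
    · exact ⟨0, fun h => absurd h hi⟩
  choose a ha using hstrong
  -- Step E : any s classes within G give at least α distinct strong colours
  have hE : ∀ S : Finset (Fin n), S ⊆ G → S.card = s → α ≤ (S.image a).card := by
    intro S hSG hScard
    obtain ⟨p, hp⟩ := exists_assignment σ S (by rw [hScard])
    have hpmem : ∀ i ∈ S, p i ∈ σ := by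
      intro i hi
      rw [← hp]
      exact Multiset.mem_map_of_mem _ (Finset.mem_val.mpr hi)
    have hAex : ∀ i : Fin n, ∃ B : Finset (Fin q), i ∈ S →
        (B ⊆ Finset.univ.filter (fun x : Fin q => c (i, x) = a i) ∧ B.card = p i) := by
      intro i
      by_cases hi : i ∈ S
      · obtain ⟨B, hB1, hB2⟩ := Finset.exists_subset_card_eq
          (show p i ≤ (Finset.univ.filter fun x : Fin q => c (i, x) = a i).card from
            le_trans (le_trans (hΔmax _ (hpmem i hi)) ((ha i (hSG hi)).2)) le_rfl)
        exact ⟨B, fun _ => ⟨hB1, hB2⟩⟩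
      · exact ⟨∅, fun h => absurd h hi⟩
    choose A hA using hAex
    have hedge := edge_aux n q σ h0σ S p hp A (fun i hi => (hA i hi).2)
    have hlow := (hc _ hedge).1
    refine le_trans hlow (Finset.card_le_card ?_)
    intro y hy
    obtain ⟨v, hv, rfl⟩ := Finset.mem_image.mp hy
    rw [mem_edge_aux] at hv
    have hfib := (hA v.1 hv.1).1 hv.2
    rw [Finset.mem_filter] at hfib
    have : c v = a v.1 := by
      have : c (v.1, v.2) = a v.1 := hfib.2
      simpa using this
    rw [this]
    exact Finset.mem_image_of_mem a hv.1
  -- Step * : few classes in few colours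
  set D := (s - 1) / (α - 1) with hD
  have hstar : ∀ Y : Finset ℕ, Y.card ≤ α - 1 →
      (G.filter fun i => a i ∈ Y).card ≤ s - 1 := by
    intro Y hY
    by_contra h
    have hge : s ≤ (G.filter fun i => a i ∈ Y).card := by omega
    obtain ⟨S, hSsub, hScard⟩ := Finset.exists_subset_card_eq hge
    have hSG : S ⊆ G := hSsub.trans (Finset.filter_subset _ _)
    have h1 := hE S hSG hScard
    have h2 : S.image a ⊆ Y := by
      intro y hy
      obtain ⟨i, hiS, rfl⟩ := Finset.mem_image.mp hy
      exact (Finset.mem_filter.mp (hSsub hiS)).2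
    have := Finset.card_le_card h2
    omega
  -- counting
  set X' := G.image a with hX'
  have hX'X : X' ⊆ X := by
    intro y hy
    obtain ⟨i, hi, rfl⟩ := Finset.mem_image.mp hy
    exact (ha i hi).1
  have hX'β : X'.card ≤ β := le_trans (Finset.card_le_card hX'X) (by rw [hXcard]; exact ht)
  set m := fun y : ℕ => (G.filter fun i => a i = y).card with hm
  have hpartition : ∀ Y : Finset ℕ,
      (G.filter fun i => a i ∈ Y).card = ∑ y ∈ Y, m y := by
    intro Y
    have hsplit : (G.filter fun i => a i ∈ Y) =
        Y.biUnion (fun y => G.filter fun i => a i = y) := by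
      ext i
      simp only [Finset.mem_filter, Finset.mem_biUnion]
      constructor
      · rintro ⟨hiG, hiY⟩; exact ⟨a i, hiY, hiG, rfl⟩
      · rintro ⟨y, hyY, hiG, rfl⟩; exact ⟨hiG, hyY⟩
    rw [hsplit, Finset.card_biUnion]
    intro y hy z hz hyz
    rw [Function.onFun, Finset.disjoint_left]
    intro i hi1 hi2
    rw [Finset.mem_filter] at hi1 hi2
    exact hyz (hi1.2 ▸ hi2.2 ▸ rfl)
  have hGfull : (G.filter fun i => a i ∈ X').card = G.card := by
    congr 1
    apply Finset.filter_true_of_mem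
    intro i hi
    exact Finset.mem_image_of_mem a hi
  by_cases hcase : X'.card ≤ α - 1
  · have h2 := hstar X' hcase
    rw [hGfull] at h2
    omega
  · push_neg at hcase
    obtain ⟨Y, hYmem, hYmax⟩ := Finset.exists_max_image
      (X'.powersetCard (α - 1)) (fun Y => ∑ y ∈ Y, m y)
      (Finset.powersetCard_nonempty.mpr (le_of_lt hcase))
    obtain ⟨hYsub, hYcard⟩ := Finset.mem_powersetCard.mp hYmem
    have hYsum : ∑ y ∈ Y, m y ≤ s - 1 := by
      rw [← hpartition Y]
      exact hstar Y (le_of_eq hYcard)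
    -- a minimal colour of Y has multiplicity ≤ D
    obtain ⟨z, hzY, hzmin⟩ := Finset.exists_min_image Y m
      (Finset.card_pos.mp (by rw [hYcard]; omega))
    have hzD : m z ≤ D := by
      have hsum1 : (α - 1) * m z ≤ ∑ y ∈ Y, m y := by
        calc (α - 1) * m z = ∑ _y ∈ Y, m z := by
              rw [Finset.sum_const, hYcard, smul_eq_mul]
          _ ≤ ∑ y ∈ Y, m y := Finset.sum_le_sum (fun y hy => hzmin y hy)
      have : (α - 1) * m z ≤ s - 1 := le_trans hsum1 hYsum
      rw [hD]
      exact Nat.le_div_iff_mul_le (by omega) |>.mpr (by rwa [mul_comm])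
    -- swap argument : colours outside Y have multiplicity ≤ m z ≤ D
    have hswap : ∀ y ∈ X' \ Y, m y ≤ D := by
      intro y hy
      rw [Finset.mem_sdiff] at hy
      have hnotin : y ∉ Y.erase z := fun h => hy.2 (Finset.mem_of_mem_erase h)
      have hY'mem : insert y (Y.erase z) ∈ X'.powersetCard (α - 1) := by
        rw [Finset.mem_powersetCard]
        constructor
        · intro w hw
          rcases Finset.mem_insert.mp hw with rfl | hw'
          · exact hy.1
          · exact hYsub (Finset.mem_of_mem_erase hw')
        · rw [Finset.card_insert_of_notMem hnotin, Finset.card_erase_of_mem hzY, hYcard]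
          omega
      have hle := hYmax _ hY'mem
      rw [Finset.sum_insert hnotin] at hle
      have heq : m z + ∑ w ∈ Y.erase z, m w = ∑ w ∈ Y, m w :=
        Finset.add_sum_erase _ _ hzY
      have hmy : m y ≤ m z := by omega
      exact le_trans hmy hzD
    -- total count
    have htot : G.card = ∑ y ∈ X', m y := by
      rw [← hpartition X', hGfull]
    have hsdiff : ∑ y ∈ X' \ Y, m y + ∑ y ∈ Y, m y = ∑ y ∈ X', m y :=
      Finset.sum_sdiff hYsub
    have hrest : ∑ y ∈ X' \ Y, m y ≤ (X' \ Y).card * D := by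
      calc ∑ y ∈ X' \ Y, m y ≤ ∑ _y ∈ X' \ Y, D := Finset.sum_le_sum hswap
        _ = (X' \ Y).card * D := by rw [Finset.sum_const, smul_eq_mul]
    have hsd : (X' \ Y).card = X'.card - (α - 1) := by
      rw [Finset.card_sdiff_of_subset hYsub, hYcard]
    have h1 : (X' \ Y).card * D ≤ (s - α) * D :=
      Nat.mul_le_mul_right _ (by omega)
    have hfinal : n ≤ s - 1 + (s - α) * D + β := by
      have hGle : G.card ≤ (s - α) * D + (s - 1) := by
        rw [htot, ← hsdiff]
        omega
      omega
    rw [mul_comm] at hfinal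
    omega
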